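/- For all real x ≥ 0 and all real p ≥ 0, the function y_p(x) = (p+1)x − p − x^{p+1} satisfies y_p(x) ≤ −p(1−√x)². -/

import Mathlib

theorem young_refined (x p : ℝ) (hx : 0 ≤ x) (hp : 0 ≤ p) :
    (p + 1) * x - p - x ^ (p + 1) ≤ -p * (1 - Real.sqrt x) ^ 2 := by
  rcases eq_or_lt_of_le hx with h0 | hxpos
  · rw [← h0]
    rw [Real.zero_rpow (by positivity), Real.sqrt_zero]
    nlinarith
  set t := Real.sqrt x with ht
  have htpos : 0 < t := Real.sqrt_pos.mpr hxpos
  have ht2 : t ^ 2 = x := Real.sq_sqrt hx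
  set A := t ^ (p + 1) with hA
  have hA0 : 0 ≤ A := Real.rpow_nonneg htpos.le _
  have hxA : x ^ (p + 1) = A ^ 2 := by
    rw [← ht2, ← Real.rpow_natCast A 2, ← Real.rpow_natCast t 2,
      ← Real.rpow_mul htpos.le, ← Real.rpow_mul htpos.le]
    ring_nf
  have hbern : (p + 1) * t - p ≤ A := by
    have := one_add_mul_self_le_rpow_one_add (s := t - 1) (by linarith) (p := p + 1)
      (by linarith)
    calc (p + 1) * t - p = 1 + (p + 1) * (t - 1) := by ring
    _ ≤ (1 + (t - 1)) ^ (p + 1) := this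
    _ = A := by norm_num [hA]
  rw [hxA]
  rcases le_or_gt 0 ((p + 1) * t - p) with hc | hc
  · nlinarith [sq_nonneg (p * (t - 1)), mul_le_mul hbern hbern hc hA0]
  · nlinarith [sq_nonneg A, mul_nonneg htpos.le hp]
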